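/- Let G be a finite simple graph containing nine distinct vertices v0, h, l1, l2, l3, r1, r2, r3, b such that the induced subgraph of G on X = {v0, h, l1, l2, l3, r1, r2, r3, b} has edge set exactly the union of the 4-cycle v0 l3 b r3, the 5-cycle v0 h l1 l2 l3, and the 5-cycle v0 h r1 r2 r3 (that is, exactly the 11 edges v0l3, l3b, br3, r3v0, v0h, hl1, l1l2, l2l3, hr1, r1r2, r2r3), and such that deg_G(v0) = deg_G(l1) = deg_G(r1) = 3 and deg_G(h) = deg_G(l2) = deg_G(l3) = deg_G(r2) = deg_G(r3) = deg_G(b) = 4. If G − X is (2,1)-decomposable, then G is (2,1)-decomposable. -/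

import Mathlib

/-- A graph `G` is `d`-degenerate if every nonempty (induced) subgraph has a
vertex of degree at most `d`. -/
def SimpleGraph.DegenerateLE {V : Type*} (G : SimpleGraph V) (d : ℕ) : Prop :=
  ∀ S : Set V, S.Nonempty → ∃ v ∈ S, (S ∩ G.neighborSet v).ncard ≤ d

/-- A graph `G` is `(d, h)`-decomposable if there is a subgraph `H` of `G` with
maximum degree at most `h` such that `G - E(H)` is `d`-degenerate. -/
def SimpleGraph.IsDecomposable {V : Type*} (G : SimpleGraph V) (d h : ℕ) : Prop :=
  ∃ H : SimpleGraph V, H ≤ G ∧ (∀ v, (H.neighborSet v).ncard ≤ h) ∧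
    (G \ H).DegenerateLE d

private lemma aux_diff2 {V : Type*} {A T : Set V} {a b : V}
    (hT : T ⊆ A) (ha : a ∈ A) (hb : b ∈ A) (hab : a ≠ b) (haT : a ∉ T) (hbT : b ∉ T)
    (hAfin : A.Finite) (hA : A.ncard = 4) : T.ncard ≤ 2 := by
  have hsub : T ⊆ A \ {a, b} := fun x hx =>
    ⟨hT hx, by rintro (rfl | rfl) <;> [exact haT hx; exact hbT hx]⟩
  have hpair : ({a, b} : Set V) ⊆ A := by rintro x (rfl | rfl) <;> assumption
  have h1 : (A \ {a, b}).ncard = A.ncard - ({a, b} : Set V).ncard :=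
    Set.ncard_diff hpair
  have h2 : ({a, b} : Set V).ncard = 2 := Set.ncard_pair hab
  have := Set.ncard_le_ncard hsub hAfin.diff
  omega

private lemma aux_diff1 {V : Type*} {A T : Set V} {a : V}
    (hT : T ⊆ A) (ha : a ∈ A) (haT : a ∉ T)
    (hAfin : A.Finite) (hA : A.ncard = 3) : T.ncard ≤ 2 := by
  have hsub : T ⊆ A \ {a} := fun x hx => ⟨hT hx, by rintro rfl; exact haT hx⟩
  have h1 : (A \ {a}).ncard = A.ncard - ({a} : Set V).ncard :=
    Set.ncard_diff (by simpa using ha)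
  have h2 : ({a} : Set V).ncard = 1 := Set.ncard_singleton a
  have := Set.ncard_le_ncard hsub hAfin.diff
  omega


set_option maxHeartbeats 1000000 in
private lemma matching_mem {V : Type*} (v₀ h l₁ l₂ l₃ r₂ r₃ b : V) (x y : V) :
    s(x, y) ∈ ({s(v₀, h), s(l₁, l₂), s(l₃, b), s(r₂, r₃)} : Set (Sym2 V)) ↔
      (x = v₀ ∧ y = h) ∨ (x = h ∧ y = v₀) ∨ (x = l₁ ∧ y = l₂) ∨ (x = l₂ ∧ y = l₁) ∨
      (x = l₃ ∧ y = b) ∨ (x = b ∧ y = l₃) ∨ (x = r₂ ∧ y = r₃) ∨ (x = r₃ ∧ y = r₂) := by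
  simp only [Set.mem_insert_iff, Set.mem_singleton_iff, Sym2.eq_iff]
  tauto

/-- Reducible 'light 3-vertex' configuration of Figure 4(a): a 4-cycle
`v₀ l₃ b r₃` together with the 5-cycles `v₀ h l₁ l₂ l₃` and `v₀ h r₁ r₂ r₃`,
inducing exactly these eleven edges. -/
theorem statement7 {V : Type*} [Fintype V] (G : SimpleGraph V)
    (v₀ h l₁ l₂ l₃ r₁ r₂ r₃ b : V)
    (hne : [v₀, h, l₁, l₂, l₃, r₁, r₂, r₃, b].Pairwise (· ≠ ·))
    (hind : ∀ x ∈ ({v₀, h, l₁, l₂, l₃, r₁, r₂, r₃, b} : Set V),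
      ∀ y ∈ ({v₀, h, l₁, l₂, l₃, r₁, r₂, r₃, b} : Set V),
      (G.Adj x y ↔ s(x, y) ∈
        ({s(v₀, l₃), s(l₃, b), s(b, r₃), s(r₃, v₀), s(v₀, h), s(h, l₁), s(l₁, l₂),
          s(l₂, l₃), s(h, r₁), s(r₁, r₂), s(r₂, r₃)} : Set (Sym2 V))))
    (hdv₀ : (G.neighborSet v₀).ncard = 3) (hdh : (G.neighborSet h).ncard = 4)
    (hdl₁ : (G.neighborSet l₁).ncard = 3) (hdl₂ : (G.neighborSet l₂).ncard = 4)
    (hdl₃ : (G.neighborSet l₃).ncard = 4)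
    (hdr₁ : (G.neighborSet r₁).ncard = 3) (hdr₂ : (G.neighborSet r₂).ncard = 4)
    (hdr₃ : (G.neighborSet r₃).ncard = 4) (hdb : (G.neighborSet b).ncard = 4)
    (hdec : (G.induce (({v₀, h, l₁, l₂, l₃, r₁, r₂, r₃, b} : Set V)ᶜ)).IsDecomposable 2 1) :
    G.IsDecomposable 2 1 := by
  classical
  set X : Set V := {v₀, h, l₁, l₂, l₃, r₁, r₂, r₃, b} with hX
  simp only [List.pairwise_cons, List.mem_cons, List.mem_singleton, List.not_mem_nil,
    forall_eq_or_imp, forall_eq, false_implies, implies_true, and_true] at hne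
  obtain ⟨⟨d01, d02, d03, d04, d05, d06, d07, d08⟩,
          ⟨d12, d13, d14, d15, d16, d17, d18⟩,
          ⟨d23, d24, d25, d26, d27, d28⟩,
          ⟨d34, d35, d36, d37, d38⟩,
          ⟨d45, d46, d47, d48⟩,
          ⟨d56, d57, d58⟩, ⟨d67, d68⟩, d78, -, -⟩ := hne
  -- adjacency facts for the 11 edges
  have mem_of : ∀ x ∈ X, True := fun _ _ => trivial
  have adj : ∀ x ∈ X, ∀ y ∈ X, (G.Adj x y ↔ s(x, y) ∈
        ({s(v₀, l₃), s(l₃, b), s(b, r₃), s(r₃, v₀), s(v₀, h), s(h, l₁), s(l₁, l₂),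
          s(l₂, l₃), s(h, r₁), s(r₁, r₂), s(r₂, r₃)} : Set (Sym2 V))) := hind
  have e1 : G.Adj v₀ l₃ := (adj _ (by simp [hX]) _ (by simp [hX])).mpr (by simp)
  have e2 : G.Adj l₃ b := (adj _ (by simp [hX]) _ (by simp [hX])).mpr (by simp)
  have e3 : G.Adj b r₃ := (adj _ (by simp [hX]) _ (by simp [hX])).mpr (by simp)
  have e4 : G.Adj r₃ v₀ := (adj _ (by simp [hX]) _ (by simp [hX])).mpr (by simp)
  have e5 : G.Adj v₀ h := (adj _ (by simp [hX]) _ (by simp [hX])).mpr (by simp)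
  have e6 : G.Adj h l₁ := (adj _ (by simp [hX]) _ (by simp [hX])).mpr (by simp)
  have e7 : G.Adj l₁ l₂ := (adj _ (by simp [hX]) _ (by simp [hX])).mpr (by simp)
  have e8 : G.Adj l₂ l₃ := (adj _ (by simp [hX]) _ (by simp [hX])).mpr (by simp)
  have e9 : G.Adj h r₁ := (adj _ (by simp [hX]) _ (by simp [hX])).mpr (by simp)
  have e10 : G.Adj r₁ r₂ := (adj _ (by simp [hX]) _ (by simp [hX])).mpr (by simp)
  have e11 : G.Adj r₂ r₃ := (adj _ (by simp [hX]) _ (by simp [hX])).mpr (by simp)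
  obtain ⟨H', hH'le, hH'deg, hH'degen⟩ := hdec
  -- the matching inside X
  set M : Set (Sym2 V) := {s(v₀, h), s(l₁, l₂), s(l₃, b), s(r₂, r₃)} with hM
  obtain ⟨H, hHadj⟩ : ∃ H : SimpleGraph V, ∀ x y : V, H.Adj x y ↔
      (∃ u w : (Xᶜ : Set V), H'.Adj u w ∧ (u : V) = x ∧ (w : V) = y) ∨ (s(x, y) ∈ M ∧ x ≠ y) :=
    ⟨(H'.map (Function.Embedding.subtype (· ∈ Xᶜ))) ⊔ SimpleGraph.fromEdgeSet M,
      fun x y => by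
        simp only [SimpleGraph.sup_adj, SimpleGraph.map_adj,
          Function.Embedding.coe_subtype, SimpleGraph.fromEdgeSet_adj]
        exact or_congr_left (SimpleGraph.map_adj (Function.Embedding.subtype (· ∈ Xᶜ)) H' x y)⟩
  have hMadj : ∀ x y : V, s(x, y) ∈ M ↔
      (x = v₀ ∧ y = h) ∨ (x = h ∧ y = v₀) ∨ (x = l₁ ∧ y = l₂) ∨ (x = l₂ ∧ y = l₁) ∨
      (x = l₃ ∧ y = b) ∨ (x = b ∧ y = l₃) ∨ (x = r₂ ∧ y = r₃) ∨ (x = r₃ ∧ y = r₂) := by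
    intro x y
    rw [hM]
    exact matching_mem v₀ h l₁ l₂ l₃ r₂ r₃ b x y
  -- matching edges are in H
  have hH_v₀h : H.Adj v₀ h := (hHadj _ _).mpr (Or.inr ⟨by simp [hM], d01⟩)
  have hH_l₁l₂ : H.Adj l₁ l₂ := (hHadj _ _).mpr (Or.inr ⟨by simp [hM], d23⟩)
  have hH_l₃b : H.Adj l₃ b := (hHadj _ _).mpr (Or.inr ⟨by simp [hM], d48⟩)
  have hH_r₂r₃ : H.Adj r₂ r₃ := (hHadj _ _).mpr (Or.inr ⟨by simp [hM], d67⟩)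
  have hXmem : ∀ x : V, x ∈ X ↔ (x = v₀ ∨ x = h ∨ x = l₁ ∨ x = l₂ ∨ x = l₃ ∨ x = r₁ ∨
      x = r₂ ∨ x = r₃ ∨ x = b) := by intro x; simp [hX]
  refine ⟨H, ?_, ?_, ?_⟩
  · -- H ≤ G
    intro x y hxy
    rcases (hHadj _ _).mp hxy with ⟨u, w, huw, rfl, rfl⟩ | ⟨hmem, hne'⟩
    · exact hH'le huw
    · rcases (hMadj _ _).mp hmem with ⟨rfl, rfl⟩ | ⟨rfl, rfl⟩ | ⟨rfl, rfl⟩ | ⟨rfl, rfl⟩ |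
        ⟨rfl, rfl⟩ | ⟨rfl, rfl⟩ | ⟨rfl, rfl⟩ | ⟨rfl, rfl⟩
      · exact e5
      · exact e5.symm
      · exact e7
      · exact e7.symm
      · exact e2
      · exact e2.symm
      · exact e11
      · exact e11.symm
  · -- max degree of H ≤ 1
    intro v
    by_cases hv : v ∈ X
    · -- v in X: neighbours only via matching
      have hsub : H.neighborSet v ⊆
          {w | (v = v₀ ∧ w = h) ∨ (v = h ∧ w = v₀) ∨ (v = l₁ ∧ w = l₂) ∨ (v = l₂ ∧ w = l₁) ∨
            (v = l₃ ∧ w = b) ∨ (v = b ∧ w = l₃) ∨ (v = r₂ ∧ w = r₃) ∨ (v = r₃ ∧ w = r₂)} := by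
        intro y hy
        rcases (hHadj _ _).mp hy with ⟨u, w, huw, hu, hw⟩ | ⟨hmem, hne'⟩
        · exact absurd (hu ▸ u.2) (by simpa using hv)
        · exact (hMadj _ _).mp hmem
      rcases (hXmem v).mp hv with hv1 | hv1 | hv1 | hv1 | hv1 | hv1 | hv1 | hv1 | hv1
      · have hone : H.neighborSet v ⊆ ({h} : Set V) := by
          intro y hy
          rcases hsub hy with ⟨_, rfl⟩|⟨hc,_⟩|⟨hc,_⟩|⟨hc,_⟩|⟨hc,_⟩|⟨hc,_⟩|⟨hc,_⟩|⟨hc,_⟩ <;>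
            first | rfl | (exact absurd (hv1.symm.trans hc) (by assumption)) | (exact absurd (hv1.symm.trans hc) (fun e => absurd e.symm (by assumption)))
        exact le_trans (Set.ncard_le_ncard hone (Set.toFinite _)) (le_of_eq (Set.ncard_singleton _))
      · have hone : H.neighborSet v ⊆ ({v₀} : Set V) := by
          intro y hy
          rcases hsub hy with ⟨hc,_⟩|⟨_, rfl⟩|⟨hc,_⟩|⟨hc,_⟩|⟨hc,_⟩|⟨hc,_⟩|⟨hc,_⟩|⟨hc,_⟩ <;>
            first | rfl | (exact absurd (hv1.symm.trans hc) (by assumption)) | (exact absurd (hv1.symm.trans hc) (fun e => absurd e.symm (by assumption)))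
        exact le_trans (Set.ncard_le_ncard hone (Set.toFinite _)) (le_of_eq (Set.ncard_singleton _))
      · have hone : H.neighborSet v ⊆ ({l₂} : Set V) := by
          intro y hy
          rcases hsub hy with ⟨hc,_⟩|⟨hc,_⟩|⟨_, rfl⟩|⟨hc,_⟩|⟨hc,_⟩|⟨hc,_⟩|⟨hc,_⟩|⟨hc,_⟩ <;>
            first | rfl | (exact absurd (hv1.symm.trans hc) (by assumption)) | (exact absurd (hv1.symm.trans hc) (fun e => absurd e.symm (by assumption)))
        exact le_trans (Set.ncard_le_ncard hone (Set.toFinite _)) (le_of_eq (Set.ncard_singleton _))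
      · have hone : H.neighborSet v ⊆ ({l₁} : Set V) := by
          intro y hy
          rcases hsub hy with ⟨hc,_⟩|⟨hc,_⟩|⟨hc,_⟩|⟨_, rfl⟩|⟨hc,_⟩|⟨hc,_⟩|⟨hc,_⟩|⟨hc,_⟩ <;>
            first | rfl | (exact absurd (hv1.symm.trans hc) (by assumption)) | (exact absurd (hv1.symm.trans hc) (fun e => absurd e.symm (by assumption)))
        exact le_trans (Set.ncard_le_ncard hone (Set.toFinite _)) (le_of_eq (Set.ncard_singleton _))
      · have hone : H.neighborSet v ⊆ ({b} : Set V) := by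
          intro y hy
          rcases hsub hy with ⟨hc,_⟩|⟨hc,_⟩|⟨hc,_⟩|⟨hc,_⟩|⟨_, rfl⟩|⟨hc,_⟩|⟨hc,_⟩|⟨hc,_⟩ <;>
            first | rfl | (exact absurd (hv1.symm.trans hc) (by assumption)) | (exact absurd (hv1.symm.trans hc) (fun e => absurd e.symm (by assumption)))
        exact le_trans (Set.ncard_le_ncard hone (Set.toFinite _)) (le_of_eq (Set.ncard_singleton _))
      · have hone : H.neighborSet v ⊆ (∅ : Set V) := by
          intro y hy
          rcases hsub hy with ⟨hc,_⟩|⟨hc,_⟩|⟨hc,_⟩|⟨hc,_⟩|⟨hc,_⟩|⟨hc,_⟩|⟨hc,_⟩|⟨hc,_⟩ <;>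
            first | rfl | (exact absurd (hv1.symm.trans hc) (by assumption)) | (exact absurd (hv1.symm.trans hc) (fun e => absurd e.symm (by assumption)))
        exact le_trans (Set.ncard_le_ncard hone (Set.toFinite _)) (by rw [Set.ncard_empty]; exact Nat.zero_le _)
      · have hone : H.neighborSet v ⊆ ({r₃} : Set V) := by
          intro y hy
          rcases hsub hy with ⟨hc,_⟩|⟨hc,_⟩|⟨hc,_⟩|⟨hc,_⟩|⟨hc,_⟩|⟨hc,_⟩|⟨_, rfl⟩|⟨hc,_⟩ <;>
            first | rfl | (exact absurd (hv1.symm.trans hc) (by assumption)) | (exact absurd (hv1.symm.trans hc) (fun e => absurd e.symm (by assumption)))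
        exact le_trans (Set.ncard_le_ncard hone (Set.toFinite _)) (le_of_eq (Set.ncard_singleton _))
      · have hone : H.neighborSet v ⊆ ({r₂} : Set V) := by
          intro y hy
          rcases hsub hy with ⟨hc,_⟩|⟨hc,_⟩|⟨hc,_⟩|⟨hc,_⟩|⟨hc,_⟩|⟨hc,_⟩|⟨hc,_⟩|⟨_, rfl⟩ <;>
            first | rfl | (exact absurd (hv1.symm.trans hc) (by assumption)) | (exact absurd (hv1.symm.trans hc) (fun e => absurd e.symm (by assumption)))
        exact le_trans (Set.ncard_le_ncard hone (Set.toFinite _)) (le_of_eq (Set.ncard_singleton _))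
      · have hone : H.neighborSet v ⊆ ({l₃} : Set V) := by
          intro y hy
          rcases hsub hy with ⟨hc,_⟩|⟨hc,_⟩|⟨hc,_⟩|⟨hc,_⟩|⟨hc,_⟩|⟨_, rfl⟩|⟨hc,_⟩|⟨hc,_⟩ <;>
            first | rfl | (exact absurd (hv1.symm.trans hc) (by assumption)) | (exact absurd (hv1.symm.trans hc) (fun e => absurd e.symm (by assumption)))
        exact le_trans (Set.ncard_le_ncard hone (Set.toFinite _)) (le_of_eq (Set.ncard_singleton _))
    · -- v outside X : neighbours come from H'
      have hsub : H.neighborSet v ⊆ (↑) '' (H'.neighborSet ⟨v, hv⟩) := by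
        intro y hy
        rcases (hHadj _ _).mp hy with ⟨u, w, huw, hu, hw⟩ | ⟨hmem, hne'⟩
        · refine ⟨w, ?_, hw⟩
          have : u = ⟨v, hv⟩ := Subtype.ext hu
          exact this ▸ huw
        · exfalso
          rcases (hMadj _ _).mp hmem with ⟨rfl, _⟩ | ⟨rfl, _⟩ | ⟨rfl, _⟩ | ⟨rfl, _⟩ |
            ⟨rfl, _⟩ | ⟨rfl, _⟩ | ⟨rfl, _⟩ | ⟨rfl, _⟩ <;> exact hv (by simp [hX])
      calc (H.neighborSet v).ncard ≤ ((↑) '' (H'.neighborSet ⟨v, hv⟩)).ncard :=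
              Set.ncard_le_ncard hsub (Set.toFinite _)
        _ = (H'.neighborSet ⟨v, hv⟩).ncard :=
              Set.ncard_image_of_injective _ Subtype.coe_injective
        _ ≤ 1 := hH'deg _
  · -- degeneracy of G \ H
    intro S hS
    -- helper: membership in S ∩ (G\H)-neighbourhood
    have hmemGH : ∀ x y : V, y ∈ S ∩ (G \ H).neighborSet x →
        y ∈ S ∧ G.Adj x y ∧ ¬ H.Adj x y := by
      intro x y hy
      exact ⟨hy.1, (SimpleGraph.sdiff_adj ..).mp hy.2⟩
    have hTsub : ∀ x : V, S ∩ (G \ H).neighborSet x ⊆ G.neighborSet x := by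
      intro x y hy; exact (hmemGH x y hy).2.1
    by_cases hv₀ : v₀ ∈ S
    · refine ⟨v₀, hv₀, aux_diff1 (hTsub v₀) e5 ?_ (Set.toFinite _) hdv₀⟩
      intro hmem; exact (hmemGH _ _ hmem).2.2 hH_v₀h
    · by_cases hl₃ : l₃ ∈ S
      · refine ⟨l₃, hl₃, aux_diff2 (hTsub l₃) e2 e1.symm d08.symm ?_ ?_ (Set.toFinite _) hdl₃⟩
        · intro hmem; exact (hmemGH _ _ hmem).2.2 hH_l₃b
        · intro hmem; exact hv₀ (hmemGH _ _ hmem).1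
      · by_cases hl₂ : l₂ ∈ S
        · refine ⟨l₂, hl₂, aux_diff2 (hTsub l₂) e7.symm e8 d24 ?_ ?_ (Set.toFinite _) hdl₂⟩
          · intro hmem; exact (hmemGH _ _ hmem).2.2 hH_l₁l₂.symm
          · intro hmem; exact hl₃ (hmemGH _ _ hmem).1
        · by_cases hr₃ : r₃ ∈ S
          · refine ⟨r₃, hr₃, aux_diff2 (hTsub r₃) e11.symm e4 d06.symm ?_ ?_
              (Set.toFinite _) hdr₃⟩
            · intro hmem; exact (hmemGH _ _ hmem).2.2 hH_r₂r₃.symm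
            · intro hmem; exact hv₀ (hmemGH _ _ hmem).1
          · by_cases hb : b ∈ S
            · refine ⟨b, hb, aux_diff2 (hTsub b) e2.symm e3 d47 ?_ ?_ (Set.toFinite _) hdb⟩
              · intro hmem; exact hl₃ (hmemGH _ _ hmem).1
              · intro hmem; exact hr₃ (hmemGH _ _ hmem).1
            · by_cases hl₁ : l₁ ∈ S
              · refine ⟨l₁, hl₁, aux_diff1 (hTsub l₁) e7 ?_ (Set.toFinite _) hdl₁⟩
                intro hmem; exact (hmemGH _ _ hmem).2.2 hH_l₁l₂
              · by_cases hh : h ∈ S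
                · refine ⟨h, hh, aux_diff2 (hTsub h) e5.symm e6 d02 ?_ ?_
                    (Set.toFinite _) hdh⟩
                  · intro hmem; exact (hmemGH _ _ hmem).2.2 hH_v₀h.symm
                  · intro hmem; exact hl₁ (hmemGH _ _ hmem).1
                · by_cases hr₁ : r₁ ∈ S
                  · refine ⟨r₁, hr₁, aux_diff1 (hTsub r₁) e9.symm ?_ (Set.toFinite _) hdr₁⟩
                    intro hmem; exact hh (hmemGH _ _ hmem).1
                  · by_cases hr₂ : r₂ ∈ S
                    · refine ⟨r₂, hr₂, aux_diff2 (hTsub r₂) e11 e10.symm d57.symm ?_ ?_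
                        (Set.toFinite _) hdr₂⟩
                      · intro hmem; exact (hmemGH _ _ hmem).2.2 hH_r₂r₃
                      · intro hmem; exact hr₁ (hmemGH _ _ hmem).1
                    · -- S ⊆ Xᶜ : use the decomposition of the induced graph
                      have hSX : S ⊆ Xᶜ := by
                        intro x hx hxX
                        rcases (hXmem x).mp hxX with rfl|rfl|rfl|rfl|rfl|rfl|rfl|rfl|rfl <;>
                          exact absurd hx (by assumption)
                      set S' : Set (Xᶜ : Set V) := (↑) ⁻¹' S with hS'
                      have hS'ne : S'.Nonempty := by
                        obtain ⟨x, hx⟩ := hS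
                        exact ⟨⟨x, hSX hx⟩, hx⟩
                      obtain ⟨v, hvS', hv2⟩ := hH'degen S' hS'ne
                      refine ⟨(v : V), hvS', ?_⟩
                      have him : S ∩ (G \ H).neighborSet (v : V) =
                          (↑) '' (S' ∩ ((G.induce Xᶜ) \ H').neighborSet v) := by
                        ext y
                        constructor
                        · rintro hy
                          obtain ⟨hyS, hGadj, hnH⟩ := hmemGH _ _ hy
                          refine ⟨⟨y, hSX hyS⟩, ⟨hyS, ?_⟩, rfl⟩
                          refine (SimpleGraph.sdiff_adj ..).mpr ⟨hGadj, fun hH' => hnH ?_⟩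
                          exact (hHadj _ _).mpr (Or.inl ⟨v, ⟨y, hSX hyS⟩, hH', rfl, rfl⟩)
                        · rintro ⟨⟨y', hy'⟩, ⟨hyS', hyadj⟩, rfl⟩
                          obtain ⟨hGadj, hnH'⟩ := (SimpleGraph.sdiff_adj ..).mp hyadj
                          refine ⟨hyS', (SimpleGraph.sdiff_adj ..).mpr ⟨hGadj, fun hH => ?_⟩⟩
                          rcases (hHadj _ _).mp hH with ⟨u, w, huw, hu, hw⟩ | ⟨hmem, _⟩
                          · have hu' : u = v := Subtype.ext hu
                            have hw' : w = ⟨y', hy'⟩ := Subtype.ext hw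
                            exact hnH' (hu' ▸ hw' ▸ huw)
                          · rcases (hMadj _ _).mp hmem with ⟨hc, _⟩ | ⟨hc, _⟩ | ⟨hc, _⟩ |
                              ⟨hc, _⟩ | ⟨hc, _⟩ | ⟨hc, _⟩ | ⟨hc, _⟩ | ⟨hc, _⟩ <;>
                              exact v.2 (by rw [hc]; simp [hX])
                      rw [him, Set.ncard_image_of_injective _ Subtype.coe_injective]
                      exact hv2
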